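/- Let R be a commutative ring with 2 = 0 in R, and suppose there exists t ∈ R with t² ≠ t. Let M = (Fin 2 → R) × (Fin 2 → R) with hyperbolic quadratic form Q(x, y) = x(0)·y(0) + x(1)·y(1), Clifford algebra Cl(Q), even part Cl₀ = evenOdd Q 0, and canonical involution reverse. Then for every ℓ ∈ Cl₀ with ℓ + reverse(ℓ) = 1, there exists a quadratic-form isometry φ of Q (an R-linear self-map B of M with Q(B m) = Q(m) for all m, inducing the algebra map Cl(φ) = CliffordAlgebra.map φ) such that ℓ − Cl(φ)(ℓ) does NOT lie in the image of Cl₀ under (id − reverse). (That is, no class [ℓ] with ξ([ℓ]) = 1 is stabilized by the orthogonal group, so no canonical semi-trace exists in degree 4.) -/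

import Mathlib

open CliffordAlgebra Matrix

noncomputable def hypBilin (R : Type*) [CommRing R] (n : ℕ) :
    ((Fin n → R) × (Fin n → R)) →ₗ[R] ((Fin n → R) × (Fin n → R)) →ₗ[R] R :=
  LinearMap.mk₂ R (fun p q => ∑ i, p.1 i * q.2 i)
    (fun m₁ m₂ q => by simp [add_mul, Finset.sum_add_distrib])
    (fun c m q => by simp [Finset.mul_sum, mul_assoc])
    (fun m q₁ q₂ => by simp [mul_add, Finset.sum_add_distrib])
    (fun c m q => by simp [Finset.mul_sum, mul_left_comm])

noncomputable def hypQ (R : Type*) [CommRing R] (n : ℕ) :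
    QuadraticForm R ((Fin n → R) × (Fin n → R)) :=
  LinearMap.BilinMap.toQuadraticMap (hypBilin R n)

namespace NoSemitrace

variable {R : Type*} [CommRing R]

lemma hypQ_apply (m : (Fin 2 → R) × (Fin 2 → R)) :
    hypQ R 2 m = m.1 0 * m.2 0 + m.1 1 * m.2 1 := by
  simp [hypQ, hypBilin, LinearMap.BilinMap.toQuadraticMap_apply, Fin.sum_univ_two]

/-- The Fock representation matrix of a vector. -/
def fmat : ((Fin 2 → R) × (Fin 2 → R)) →ₗ[R] Matrix (Fin 4) (Fin 4) R where
  toFun m := Matrix.of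
    ![![0, m.2 0, m.2 1, 0],
      ![m.1 0, 0, 0, m.2 1],
      ![m.1 1, 0, 0, m.2 0],
      ![0, m.1 1, m.1 0, 0]]
  map_add' m n := by
    ext i j
    fin_cases i <;> fin_cases j <;>
      simp [Matrix.add_apply]
  map_smul' c m := by
    ext i j
    fin_cases i <;> fin_cases j <;>
      simp [Matrix.smul_apply]

lemma fmat_sq (h2 : (2 : R) = 0) (m : (Fin 2 → R) × (Fin 2 → R)) :
    fmat m * fmat m = algebraMap R (Matrix (Fin 4) (Fin 4) R) (hypQ R 2 m) := by
  ext i j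
  rw [hypQ_apply]
  fin_cases i <;> fin_cases j <;>
    simp [fmat, Matrix.mul_apply, Fin.sum_univ_four, Matrix.algebraMap_matrix_apply] <;>
    first
      | ring1
      | linear_combination (m.1 0 * m.1 1) * h2
      | linear_combination (m.2 0 * m.2 1) * h2
      | linear_combination (m.1 0 * m.2 1) * h2
      | linear_combination (m.1 1 * m.2 0) * h2

/-- The Fock representation of the Clifford algebra. -/
noncomputable def Psi (h2 : (2 : R) = 0) :
    CliffordAlgebra (hypQ R 2) →ₐ[R] Matrix (Fin 4) (Fin 4) R :=
  CliffordAlgebra.lift (hypQ R 2) ⟨fmat, fmat_sq h2⟩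

@[simp] lemma Psi_ι (h2 : (2 : R) = 0) (m : (Fin 2 → R) × (Fin 2 → R)) :
    Psi h2 (ι (hypQ R 2) m) = fmat m :=
  CliffordAlgebra.lift_ι_apply _ _ _

/-- The permutation matrix (0 3)(1 2). -/
def Pmat : Matrix (Fin 4) (Fin 4) R :=
  Matrix.of ![![0,0,0,1],![0,0,1,0],![0,1,0,0],![1,0,0,0]]

lemma Pmat_sq : (Pmat : Matrix (Fin 4) (Fin 4) R) * Pmat = 1 := by
  ext i j
  fin_cases i <;> fin_cases j <;>
    simp [Pmat, Matrix.mul_apply, Fin.sum_univ_four, Matrix.one_apply,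
      Matrix.vecHead, Matrix.vecTail]

lemma Pmat_conj_fmat (m : (Fin 2 → R) × (Fin 2 → R)) :
    (Pmat : Matrix (Fin 4) (Fin 4) R) * (fmat m)ᵀ * Pmat = fmat m := by
  ext i j
  fin_cases i <;> fin_cases j <;>
    simp [Pmat, fmat, Matrix.mul_apply, Matrix.transpose_apply, Fin.sum_univ_four,
      Matrix.vecHead, Matrix.vecTail, Matrix.vecMul, dotProduct]

lemma Psi_reverse (h2 : (2 : R) = 0) (x : CliffordAlgebra (hypQ R 2)) :
    Psi h2 (reverse x) = Pmat * (Psi h2 x)ᵀ * Pmat := by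
  induction x using CliffordAlgebra.induction with
  | algebraMap r =>
    rw [reverse.commutes, AlgHom.commutes, Algebra.algebraMap_eq_smul_one]
    rw [Matrix.transpose_smul, Matrix.transpose_one]
    rw [mul_smul_comm, smul_mul_assoc, mul_one, Pmat_sq]
  | ι m =>
    rw [reverse_ι, Psi_ι]
    exact (Pmat_conj_fmat m).symm
  | mul a b ha hb =>
    rw [reverse.map_mul, _root_.map_mul, _root_.map_mul, ha, hb, Matrix.transpose_mul]
    calc Pmat * (Psi h2 b)ᵀ * Pmat * (Pmat * (Psi h2 a)ᵀ * Pmat)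
        = Pmat * ((Psi h2 b)ᵀ * ((Pmat * Pmat) * ((Psi h2 a)ᵀ * Pmat))) := by
          simp only [mul_assoc]
      _ = Pmat * ((Psi h2 b)ᵀ * (Psi h2 a)ᵀ) * Pmat := by
          rw [Pmat_sq, one_mul]; simp only [mul_assoc]
  | add a b ha hb =>
    rw [_root_.map_add, _root_.map_add, _root_.map_add, ha, hb, Matrix.transpose_add,
      Matrix.mul_add, Matrix.add_mul]

/-- The transvection vector `e₀ + a e₁ + f₀`. -/
def vvec (a : R) : (Fin 2 → R) × (Fin 2 → R) := (![1, a], ![1, 0])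

lemma hypQ_vvec (a : R) : hypQ R 2 (vvec a) = 1 := by
  rw [hypQ_apply]; simp [vvec]

lemma Umat_sq (h2 : (2 : R) = 0) (a : R) : fmat (vvec a) * fmat (vvec a) = 1 := by
  rw [fmat_sq h2, hypQ_vvec, _root_.map_one]

/-- The transvection along `vvec a`, as a linear map. -/
def tauLin (a : R) :
    ((Fin 2 → R) × (Fin 2 → R)) →ₗ[R] ((Fin 2 → R) × (Fin 2 → R)) where
  toFun m := m + (m.1 0 + m.2 0 + a * m.2 1) • vvec a
  map_add' m n := by
    refine Prod.ext ?_ ?_ <;> funext i <;>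
      simp only [Prod.fst_add, Prod.snd_add, Prod.smul_fst, Prod.smul_snd,
        Pi.add_apply, Pi.smul_apply, smul_eq_mul] <;> ring
  map_smul' c m := by
    refine Prod.ext ?_ ?_ <;> funext i <;>
      simp only [Prod.smul_fst, Prod.smul_snd, Prod.fst_add, Prod.snd_add,
        Pi.add_apply, Pi.smul_apply, smul_eq_mul, RingHom.id_apply] <;> ring

/-- The transvection along `vvec a`, as an isometry of `hypQ R 2`. -/
noncomputable def tauIso (h2 : (2 : R) = 0) (a : R) : hypQ R 2 →qᵢ hypQ R 2 where
  toLinearMap := tauLin a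
  map_app' m := by
    show hypQ R 2 (m + (m.1 0 + m.2 0 + a * m.2 1) • vvec a) = hypQ R 2 m
    rw [hypQ_apply, hypQ_apply]
    simp only [vvec, Prod.fst_add, Prod.snd_add, Prod.smul_fst, Prod.smul_snd,
      Pi.add_apply, Pi.smul_apply, smul_eq_mul, Matrix.cons_val_zero, Matrix.cons_val_one,
      Matrix.head_cons]
    linear_combination ((m.1 0 + m.2 0 + a * m.2 1) * (m.1 0 + m.2 0 + a * m.2 1)) * h2

lemma fmat_anticomm (h2 : (2 : R) = 0) (m v : (Fin 2 → R) × (Fin 2 → R)) :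
    fmat m * fmat v + fmat v * fmat m =
      algebraMap R (Matrix (Fin 4) (Fin 4) R)
        (hypQ R 2 (m + v) - hypQ R 2 m - hypQ R 2 v) := by
  have h := fmat_sq h2 (m + v)
  rw [_root_.map_add] at h
  have expand : (fmat m + fmat v) * (fmat m + fmat v) =
      fmat m * fmat m + (fmat m * fmat v + fmat v * fmat m) + fmat v * fmat v := by
    noncomm_ring
  rw [expand, fmat_sq h2 m, fmat_sq h2 v] at h
  rw [_root_.map_sub, _root_.map_sub, ← h]
  abel

lemma fmat_tau (h2 : (2 : R) = 0) (a : R) (m : (Fin 2 → R) × (Fin 2 → R)) :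
    fmat (tauLin a m) = fmat (vvec a) * fmat m * fmat (vvec a) := by
  set β := m.1 0 + m.2 0 + a * m.2 1 with hβ
  have hpol : hypQ R 2 (m + vvec a) - hypQ R 2 m - hypQ R 2 (vvec a) = β := by
    rw [hypQ_apply, hypQ_apply, hypQ_apply]
    simp only [vvec, Prod.fst_add, Prod.snd_add, Pi.add_apply,
      Matrix.cons_val_zero, Matrix.cons_val_one, Matrix.head_cons, hβ]
    ring
  have hanti := fmat_anticomm h2 m (vvec a)
  rw [hpol] at hanti
  have hU : fmat (vvec a) * fmat (vvec a) = 1 := Umat_sq h2 a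
  have h1 : fmat (vvec a) * fmat m =
      algebraMap R (Matrix (Fin 4) (Fin 4) R) β - fmat m * fmat (vvec a) := by
    rw [← hanti]; abel
  have h2m : fmat m + fmat m = 0 := by
    rw [← two_smul R (fmat m), h2, zero_smul]
  have hτ : fmat (tauLin a m) = fmat m + β • fmat (vvec a) := by
    show fmat (m + β • vvec a) = _
    rw [_root_.map_add, _root_.map_smul]
  rw [hτ, h1, Matrix.sub_mul, mul_assoc, hU, mul_one, ← Algebra.smul_def]
  rw [sub_eq_add_neg, neg_eq_of_add_eq_zero_left h2m, add_comm]

/-- Conjugation by an involutive matrix, as an algebra homomorphism. -/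
def conjA (U : Matrix (Fin 4) (Fin 4) R) (hU : U * U = 1) :
    Matrix (Fin 4) (Fin 4) R →ₐ[R] Matrix (Fin 4) (Fin 4) R where
  toFun X := U * X * U
  map_one' := by show U * 1 * U = 1; rw [mul_one, hU]
  map_mul' X Y := by
    show U * (X * Y) * U = U * X * U * (U * Y * U)
    have h : U * X * U * (U * Y * U) = U * X * ((U * U) * (Y * U)) := by
      simp only [mul_assoc]
    rw [h, hU, one_mul]
    simp only [mul_assoc]
  map_zero' := by show U * 0 * U = 0; simp
  map_add' X Y := by
    show U * (X + Y) * U = U * X * U + U * Y * U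
    rw [Matrix.mul_add, Matrix.add_mul]
  commutes' r := by
    show U * algebraMap R (Matrix (Fin 4) (Fin 4) R) r * U = _
    rw [show U * algebraMap R (Matrix (Fin 4) (Fin 4) R) r =
      algebraMap R (Matrix (Fin 4) (Fin 4) R) r * U from (Algebra.commutes r U).symm,
      mul_assoc, hU, mul_one]

lemma Psi_map_tau (h2 : (2 : R) = 0) (a : R) (x : CliffordAlgebra (hypQ R 2)) :
    Psi h2 (CliffordAlgebra.map (tauIso h2 a) x) =
      fmat (vvec a) * Psi h2 x * fmat (vvec a) := by
  have key : (Psi h2).comp (CliffordAlgebra.map (tauIso h2 a)) =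
      (conjA (fmat (vvec a)) (Umat_sq h2 a)).comp (Psi h2) := by
    apply CliffordAlgebra.hom_ext
    apply LinearMap.ext
    intro m
    show Psi h2 (CliffordAlgebra.map (tauIso h2 a) (ι (hypQ R 2) m)) =
      conjA (fmat (vvec a)) (Umat_sq h2 a) (Psi h2 (ι (hypQ R 2) m))
    rw [CliffordAlgebra.map_apply_ι, Psi_ι, Psi_ι]
    show fmat (tauIso h2 a m) = fmat (vvec a) * fmat m * fmat (vvec a)
    exact fmat_tau h2 a m
  exact DFunLike.congr_fun key x

lemma entry_conjP (B : Matrix (Fin 4) (Fin 4) R) :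
    (Pmat * Bᵀ * Pmat : Matrix (Fin 4) (Fin 4) R) 2 1 = B 2 1 := by
  simp only [Matrix.mul_apply, Fin.sum_univ_four]
  simp [Pmat, Matrix.vecHead, Matrix.vecTail]

lemma entry_conjP00 (B : Matrix (Fin 4) (Fin 4) R) :
    (Pmat * Bᵀ * Pmat : Matrix (Fin 4) (Fin 4) R) 0 0 = B 3 3 := by
  simp only [Matrix.mul_apply, Fin.sum_univ_four]
  simp [Pmat, Matrix.vecHead, Matrix.vecTail]

lemma entry_conjU (a : R) (A : Matrix (Fin 4) (Fin 4) R) :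
    (fmat (vvec a) * A * fmat (vvec a) : Matrix (Fin 4) (Fin 4) R) 2 1
      = a * A 0 0 + a * a * A 0 3 + A 3 0 + a * A 3 3 := by
  simp only [Matrix.mul_apply, Fin.sum_univ_four]
  simp [fmat, vvec, Matrix.vecHead, Matrix.vecTail]
  ring

end NoSemitrace

theorem no_canonical_semitrace_degree_four {R : Type*} [CommRing R] (h2 : (2 : R) = 0)
    (t : R) (ht : t * t ≠ t) (ℓ : CliffordAlgebra (hypQ R 2))
    (hℓ₀ : ℓ ∈ evenOdd (hypQ R 2) 0)
    (hℓ : ℓ + reverse ℓ = 1) :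
    ∃ φ : hypQ R 2 →qᵢ hypQ R 2,
      ℓ - CliffordAlgebra.map φ ℓ ∉
        Submodule.map
          (LinearMap.id - (reverse (Q := hypQ R 2) :
            CliffordAlgebra (hypQ R 2) →ₗ[R] CliffordAlgebra (hypQ R 2)))
          (evenOdd (hypQ R 2) 0) := by
  classical
  set A := NoSemitrace.Psi h2 ℓ with hA
  have key : ∀ a : R,
      ℓ - CliffordAlgebra.map (NoSemitrace.tauIso h2 a) ℓ ∈
        Submodule.map
          (LinearMap.id - (reverse (Q := hypQ R 2) :
            CliffordAlgebra (hypQ R 2) →ₗ[R] CliffordAlgebra (hypQ R 2)))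
          (evenOdd (hypQ R 2) 0) →
      A 2 1 = a * A 0 0 + a * a * A 0 3 + A 3 0 + a * A 3 3 := by
    intro a hmem
    obtain ⟨u, hu, hequ⟩ := hmem
    have hequ' : u - reverse u = ℓ - CliffordAlgebra.map (NoSemitrace.tauIso h2 a) ℓ := by
      simpa using hequ
    have h3 := congrArg (NoSemitrace.Psi h2) hequ'
    rw [map_sub, map_sub, NoSemitrace.Psi_reverse, NoSemitrace.Psi_map_tau] at h3
    have h4 := congrFun (congrFun h3 2) 1
    rw [Matrix.sub_apply, Matrix.sub_apply, NoSemitrace.entry_conjP,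
      NoSemitrace.entry_conjU, sub_self] at h4
    rw [hA]
    linear_combination -h4
  have hc : A 0 0 + A 3 3 = 1 := by
    have h1 := congrArg (NoSemitrace.Psi h2) hℓ
    rw [_root_.map_add, _root_.map_one, NoSemitrace.Psi_reverse] at h1
    have h5 := congrFun (congrFun h1 0) 0
    rw [Matrix.add_apply, NoSemitrace.entry_conjP00, Matrix.one_apply_eq] at h5
    exact h5
  by_cases c0 : ℓ - CliffordAlgebra.map (NoSemitrace.tauIso h2 0) ℓ ∈
      Submodule.map
        (LinearMap.id - (reverse (Q := hypQ R 2) :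
          CliffordAlgebra (hypQ R 2) →ₗ[R] CliffordAlgebra (hypQ R 2)))
        (evenOdd (hypQ R 2) 0)
  · by_cases c1 : ℓ - CliffordAlgebra.map (NoSemitrace.tauIso h2 1) ℓ ∈
        Submodule.map
          (LinearMap.id - (reverse (Q := hypQ R 2) :
            CliffordAlgebra (hypQ R 2) →ₗ[R] CliffordAlgebra (hypQ R 2)))
          (evenOdd (hypQ R 2) 0)
    · refine ⟨NoSemitrace.tauIso h2 t, fun hmem => ht ?_⟩
      have k0 := key 0 c0
      have k1 := key 1 c1
      have kt := key t hmem
      linear_combination kt - k0 + t * hc + t * t * (k0 - k1) - t * t * hc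
    · exact ⟨NoSemitrace.tauIso h2 1, c1⟩
  · exact ⟨NoSemitrace.tauIso h2 0, c0⟩
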